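/- If J and K are measurable range functions with M_J = M_K, then J(ω) = K(ω) for almost every ω ∈ Ω. -/

import Mathlib

open MeasureTheory

section Aux

variable {Δ : Type*} [Countable Δ]

/-- `ℓ²(Δ, ℂ)` is separable when `Δ` is countable. -/
lemma lp_separable : TopologicalSpace.SeparableSpace (lp (fun _ : Δ => ℂ) 2) := by
  classical
  set s : Set (lp (fun _ : Δ => ℂ) 2) :=
    Set.range (fun δ : Δ => lp.single 2 δ (1 : ℂ)) with hs_def
  have hs : s.Countable := Set.countable_range _
  have hdense : ∀ f : lp (fun _ : Δ => ℂ) 2,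
      f ∈ closure ((Submodule.span ℂ s : Submodule ℂ _) : Set _) := by
    intro f
    have hsum := lp.hasSum_single ENNReal.ofNat_ne_top f
    refine mem_closure_of_tendsto hsum ?_
    filter_upwards with t
    refine Submodule.sum_mem _ fun δ _ => ?_
    have h1 : lp.single (E := fun _ : Δ => ℂ) 2 δ ((f δ) • (1 : ℂ)) =
        (f δ) • lp.single 2 δ (1 : ℂ) :=
      lp.single_smul (E := fun _ : Δ => ℂ) 2 δ (f δ) (1 : ℂ)
    rw [smul_eq_mul, mul_one] at h1
    rw [h1]
    exact Submodule.smul_mem _ _ (Submodule.subset_span ⟨δ, rfl⟩)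
  have hsep : TopologicalSpace.IsSeparable (Set.univ : Set (lp (fun _ : Δ => ℂ) 2)) := by
    refine TopologicalSpace.IsSeparable.mono ?_ (fun x _ => hdense x)
    exact (hs.isSeparable.span).closure
  exact TopologicalSpace.isSeparable_univ_iff.mp hsep

/-- A weakly measurable function into `ℓ²(Δ, ℂ)` is strongly measurable. -/
lemma stronglyMeasurable_of_weak {Ω : Type*} [MeasurableSpace Ω]
    (f : Ω → lp (fun _ : Δ => ℂ) 2)
    (h : ∀ b, Measurable fun ω => (inner ℂ (f ω) b : ℂ)) :
    StronglyMeasurable f := by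
  classical
  have hcoord : ∀ δ : Δ, Measurable fun ω => (f ω) δ := by
    intro δ
    have h1 : Measurable fun ω =>
        (starRingEnd ℂ) (inner ℂ (f ω) (lp.single 2 δ (1 : ℂ)) : ℂ) :=
      (Complex.continuous_conj.measurable).comp (h _)
    convert h1 using 1
    funext ω
    rw [← inner_conj_symm, starRingEnd_self_apply, lp.inner_single_left]
    simp [RCLike.inner_apply]
  have key : Filter.Tendsto
      (fun (t : Finset Δ) (ω : Ω) => ∑ δ ∈ t, lp.single 2 δ ((f ω) δ))
      Filter.atTop (nhds f) := by
    rw [tendsto_pi_nhds]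
    intro ω
    exact lp.hasSum_single ENNReal.ofNat_ne_top (f ω)
  refine stronglyMeasurable_of_tendsto Filter.atTop (fun t => ?_) key
  refine Finset.stronglyMeasurable_fun_sum _ fun δ _ => ?_
  have h2 : (fun ω => lp.single (E := fun _ : Δ => ℂ) 2 δ ((f ω) δ)) =
      fun ω => ((f ω) δ) • lp.single 2 δ (1 : ℂ) := by
    funext ω
    rw [← lp.single_smul (E := fun _ : Δ => ℂ) 2 δ ((f ω) δ) (1 : ℂ), smul_eq_mul, mul_one]
  rw [h2]
  exact ((hcoord δ).stronglyMeasurable).smul_const _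

/-- Norm bound for an orthogonal projection. -/
lemma norm_proj_le {H : Type*} [NormedAddCommGroup H] [InnerProductSpace ℂ H]
    (J : Submodule ℂ H) (x p : H) (h1 : p ∈ J) (h2 : x - p ∈ Jᗮ) : ‖p‖ ≤ ‖x‖ := by
  have horth : (inner ℂ p (x - p) : ℂ) = 0 :=
    (Submodule.mem_orthogonal J (x - p)).mp h2 p h1
  have h3 : ‖p + (x - p)‖ ^ 2 = ‖p‖ ^ 2 + 2 * RCLike.re (inner ℂ p (x - p) : ℂ)
      + ‖x - p‖ ^ 2 := norm_add_sq p (x - p)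
  rw [horth] at h3
  simp only [add_sub_cancel, map_zero, mul_zero, add_zero] at h3
  nlinarith [norm_nonneg (x - p), norm_nonneg p, norm_nonneg x]

end Aux

/-- If `J` and `K` are measurable range functions (with fiberwise orthogonal projections
`PJ`, `PK` that are weakly measurable) such that `M_J = M_K`, then `J(ω) = K(ω)` for
almost every `ω`. -/
theorem range_function_eq_ae_of_MJ_eq_MK
    (Ω : Type*) [MeasurableSpace Ω] (μ : Measure Ω) [IsFiniteMeasure μ]
    (Δ : Type*) [Countable Δ]
    (J K : Ω → Submodule ℂ (lp (fun _ : Δ => ℂ) 2))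
    (hJ : ∀ ω, IsClosed (J ω : Set (lp (fun _ : Δ => ℂ) 2)))
    (hK : ∀ ω, IsClosed (K ω : Set (lp (fun _ : Δ => ℂ) 2)))
    (PJ PK : Ω → (lp (fun _ : Δ => ℂ) 2) →L[ℂ] (lp (fun _ : Δ => ℂ) 2))
    (hPJ : ∀ ω x, PJ ω x ∈ J ω ∧ x - PJ ω x ∈ (J ω)ᗮ)
    (hPK : ∀ ω x, PK ω x ∈ K ω ∧ x - PK ω x ∈ (K ω)ᗮ)
    (hPJmeas : ∀ a b : lp (fun _ : Δ => ℂ) 2,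
      Measurable (fun ω => (inner ℂ (PJ ω a) b : ℂ)))
    (hPKmeas : ∀ a b : lp (fun _ : Δ => ℂ) 2,
      Measurable (fun ω => (inner ℂ (PK ω a) b : ℂ)))
    (hMJK : {Φ : Lp (lp (fun _ : Δ => ℂ) 2) 2 μ |
        ∀ᵐ ω ∂μ, (Φ : Ω → lp (fun _ : Δ => ℂ) 2) ω ∈ J ω} =
      {Φ : Lp (lp (fun _ : Δ => ℂ) 2) 2 μ |
        ∀ᵐ ω ∂μ, (Φ : Ω → lp (fun _ : Δ => ℂ) 2) ω ∈ K ω}) :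
    ∀ᵐ ω ∂μ, J ω = K ω := by
  classical
  set H := lp (fun _ : Δ => ℂ) 2 with hH
  -- Step 1: for any fixed a, ω ↦ PJ ω a lies a.e. in K ω (and symmetrically).
  have memK : ∀ a : H, ∀ᵐ ω ∂μ, PJ ω a ∈ K ω := by
    intro a
    have hsm : StronglyMeasurable fun ω => PJ ω a :=
      stronglyMeasurable_of_weak _ (hPJmeas a)
    have hbd : ∀ ω, ‖PJ ω a‖ ≤ ‖a‖ := fun ω =>
      norm_proj_le (J ω) a (PJ ω a) (hPJ ω a).1 (hPJ ω a).2
    have hmem : MemLp (fun ω => PJ ω a) 2 μ :=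
      MemLp.of_bound hsm.aestronglyMeasurable ‖a‖
        (Filter.Eventually.of_forall hbd)
    set Φ : Lp H 2 μ := hmem.toLp _ with hΦ
    have hcoe : (Φ : Ω → H) =ᵐ[μ] fun ω => PJ ω a := hmem.coeFn_toLp
    have hΦJ : Φ ∈ {Φ : Lp H 2 μ | ∀ᵐ ω ∂μ, (Φ : Ω → H) ω ∈ J ω} := by
      filter_upwards [hcoe] with ω hω
      rw [hω]; exact (hPJ ω a).1
    rw [hMJK] at hΦJ
    filter_upwards [hΦJ, hcoe] with ω h1 h2
    rwa [h2] at h1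
  have memJ : ∀ a : H, ∀ᵐ ω ∂μ, PK ω a ∈ J ω := by
    intro a
    have hsm : StronglyMeasurable fun ω => PK ω a :=
      stronglyMeasurable_of_weak _ (hPKmeas a)
    have hbd : ∀ ω, ‖PK ω a‖ ≤ ‖a‖ := fun ω =>
      norm_proj_le (K ω) a (PK ω a) (hPK ω a).1 (hPK ω a).2
    have hmem : MemLp (fun ω => PK ω a) 2 μ :=
      MemLp.of_bound hsm.aestronglyMeasurable ‖a‖
        (Filter.Eventually.of_forall hbd)
    set Φ : Lp H 2 μ := hmem.toLp _ with hΦ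
    have hcoe : (Φ : Ω → H) =ᵐ[μ] fun ω => PK ω a := hmem.coeFn_toLp
    have hΦK : Φ ∈ {Φ : Lp H 2 μ | ∀ᵐ ω ∂μ, (Φ : Ω → H) ω ∈ K ω} := by
      filter_upwards [hcoe] with ω hω
      rw [hω]; exact (hPK ω a).1
    rw [← hMJK] at hΦK
    filter_upwards [hΦK, hcoe] with ω h1 h2
    rwa [h2] at h1
  -- Step 2: for fixed a, PJ ω a = PK ω a a.e.
  have hproj : ∀ a : H, ∀ᵐ ω ∂μ, PJ ω a = PK ω a := by
    intro a
    filter_upwards [memK a, memJ a] with ω hJK hKJ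
    set d : H := PJ ω a - PK ω a with hd
    have hdJ : d ∈ J ω := Submodule.sub_mem _ (hPJ ω a).1 hKJ
    have hdK : d ∈ K ω := Submodule.sub_mem _ hJK (hPK ω a).1
    have h1 : (inner ℂ d (a - PJ ω a) : ℂ) = 0 :=
      (Submodule.mem_orthogonal (J ω) _).mp (hPJ ω a).2 d hdJ
    have h2 : (inner ℂ d (a - PK ω a) : ℂ) = 0 :=
      (Submodule.mem_orthogonal (K ω) _).mp (hPK ω a).2 d hdK
    have h3 : (inner ℂ d d : ℂ) = 0 := by
      have : (inner ℂ d d : ℂ) = inner ℂ d (a - PK ω a) - inner ℂ d (a - PJ ω a) := by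
        rw [← inner_sub_right]
        congr 1
        rw [hd]
        abel
      rw [this, h1, h2, sub_zero]
    have : d = 0 := inner_self_eq_zero.mp h3
    exact sub_eq_zero.mp this
  -- Step 3: upgrade to all a simultaneously using a countable dense set.
  have : TopologicalSpace.SeparableSpace H := lp_separable
  obtain ⟨D, hDc, hDd⟩ := TopologicalSpace.exists_countable_dense H
  have hall : ∀ᵐ ω ∂μ, ∀ a ∈ D, PJ ω a = PK ω a :=
    (ae_ball_iff hDc).mpr fun a _ => hproj a
  filter_upwards [hall] with ω hω
  have hPeq : (PJ ω : H → H) = PK ω :=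
    Continuous.ext_on hDd (PJ ω).continuous (PK ω).continuous fun a ha => hω a ha
  -- Step 4: equal projections give equal subspaces.
  have hfix : ∀ (L : Submodule ℂ H) (P : H →L[ℂ] H),
      (∀ x, P x ∈ L ∧ x - P x ∈ Lᗮ) → ∀ x ∈ L, P x = x := by
    intro L P hP x hx
    have h1 : x - P x ∈ L := Submodule.sub_mem _ hx (hP x).1
    have h2 : (inner ℂ (x - P x) (x - P x) : ℂ) = 0 :=
      (Submodule.mem_orthogonal L _).mp (hP x).2 _ h1
    have : x - P x = 0 := inner_self_eq_zero.mp h2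
    have := sub_eq_zero.mp this
    exact this.symm
  refine le_antisymm ?_ ?_
  · intro x hx
    have h1 : PJ ω x = x := hfix (J ω) (PJ ω) (hPJ ω) x hx
    have h2 : PK ω x = x := by rw [← congrFun hPeq x, h1]
    rw [← h2]
    exact (hPK ω x).1
  · intro x hx
    have h1 : PK ω x = x := hfix (K ω) (PK ω) (hPK ω) x hx
    have h2 : PJ ω x = x := by rw [congrFun hPeq x, h1]
    rw [← h2]
    exact (hPJ ω x).1
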